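/- Let h = h₁ + ⋯ + h_d ∈ ℍ_d. Then the unique solution of the minimization problem min{‖g‖ : g ∈ ℍ_d, g(t) ≥ h(t) for all t ∈ [0,∞)^d} is h̲ = Pr_{V₂} h, and moreover Pr_{V₂} h = Pr_{V₁} h₁ + Pr_{V₁} h₂ + ⋯ + Pr_{V₁} h_d (i.e., the i-th component of Pr_{V₂} h is Pr_{V₁} h_i). -/

import Mathlib

open MeasureTheory Set Filter
open scoped ENNReal NNReal InnerProductSpace

noncomputable section

/-- Lebesgue measure on `(0, ∞)`. -/
def muPos : Measure ℝ := volume.restrict (Set.Ioi (0:ℝ))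

/-- `L²([0,∞))`, the space of derivatives.  It is isometric to the Cameron–Martin
space `ℍ₁` of the Wiener process via `h ↦ h'`, `h(t) = ∫₀ᵗ h'(s) ds`; we identify
`ℍ₁` with this Hilbert space. -/
abbrev E : Type := Lp ℝ 2 muPos

/-- The Cameron–Martin function with derivative `φ`:  `t ↦ ∫₀ᵗ φ(s) ds`. -/
def primitive (φ : E) (t : ℝ) : ℝ := ∫ s in Set.Ioc (0:ℝ) t, φ s

/-- `V₁`: elements of `ℍ₁` whose derivative admits a non-increasing version on `[0,∞)`. -/
def V1 : Set E := {φ | ∃ ψ : ℝ → ℝ, AntitoneOn ψ (Set.Ici 0) ∧ (⇑φ) =ᵐ[muPos] ψ}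

/-- The polar cone of a set in a real inner product space. -/
def polar {H : Type*} [NormedAddCommGroup H] [InnerProductSpace ℝ H] (A : Set H) : Set H :=
  {x | ∀ y ∈ A, ⟪x, y⟫_ℝ ≤ 0}

/-- `p` is the metric projection of `x` on `A` (the nearest point of `A` to `x`). -/
def IsProj {H : Type*} [NormedAddCommGroup H] (A : Set H) (x p : H) : Prop :=
  p ∈ A ∧ ∀ y ∈ A, ‖x - p‖ ≤ ‖x - y‖

/-- `ℍ_d` as a Hilbert space: `d`-tuples of elements of `ℍ₁` (identified with their
derivatives), with inner product `⟪h,g⟫ = ∑ i, ⟪hᵢ, gᵢ⟫`. -/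
abbrev HD (d : ℕ) : Type := PiLp 2 (fun _ : Fin d => E)

/-- The additive function `t ↦ ∑ i, ∫₀^{tᵢ} φᵢ(s) ds` of `ℍ_d` associated with `Φ`. -/
def addPrim {d : ℕ} (Φ : HD d) (t : Fin d → ℝ) : ℝ := ∑ i, primitive (Φ i) (t i)

/-- `V₂ = {h = h₁ + ⋯ + h_d ∈ ℍ_d : hᵢ ∈ V₁ for all i}`. -/
def V2 {d : ℕ} : Set (HD d) := {Φ | ∀ i, Φ i ∈ V1}



set_option maxHeartbeats 1000000

lemma muPos_restrict {s : Set ℝ} (hm : MeasurableSet s) (hs : s ⊆ Set.Ioi 0) :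
    muPos.restrict s = volume.restrict s := by
  rw [muPos, Measure.restrict_restrict hm, Set.inter_eq_self_of_subset_left hs]

lemma muPos_apply {s : Set ℝ} (hm : MeasurableSet s) :
    muPos s = volume (s ∩ Set.Ioi 0) := by
  rw [muPos, Measure.restrict_apply hm]

lemma not_memLp_of_lower {ψ : ℝ → ℝ} {c s₀ : ℝ} (hs₀ : 0 ≤ s₀) (hc : 0 < c)
    (h : ∀ s, s₀ < s → c ≤ ψ s) (hψ : MemLp ψ 2 muPos) : False := by
  have hint : Integrable (fun x => ψ x ^ 2) muPos := hψ.integrable_sq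
  have hlt := hint.measure_ge_lt_top (ε := c ^ 2) (by positivity)
  have hsub : Set.Ioi s₀ ⊆ {a : ℝ | c ^ 2 ≤ ψ a ^ 2} := by
    intro s hs
    have := h s hs
    have : c ^ 2 ≤ ψ s ^ 2 := by nlinarith
    simpa using this
  have hinf : muPos (Set.Ioi s₀) = ∞ := by
    rw [muPos_apply measurableSet_Ioi, Set.Ioi_inter_Ioi, Real.volume_Ioi]
  have := (measure_mono hsub).trans_lt hlt
  rw [hinf] at this
  exact (lt_irrefl _ this).elim

lemma nonneg_of_antitoneOn {ψ : ℝ → ℝ} (hψ : AntitoneOn ψ (Set.Ici 0))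
    (h2 : MemLp ψ 2 muPos) : ∀ s, 0 < s → 0 ≤ ψ s := by
  intro s hs
  by_contra hneg
  push_neg at hneg
  refine not_memLp_of_lower (s₀ := s) (c := -ψ s) hs.le (by linarith) ?_ h2.neg
  intro s' hs'
  exact neg_le_neg (hψ hs.le (hs.trans hs').le hs'.le)

lemma integrable_mul_L2 {f g : ℝ → ℝ} (hf : MemLp f 2 muPos) (hg : MemLp g 2 muPos) :
    Integrable (fun x => f x * g x) muPos := by
  refine Integrable.mono' ((hf.integrable_sq.add hg.integrable_sq).div_const 2)
    (hf.aestronglyMeasurable.mul hg.aestronglyMeasurable) (ae_of_all _ fun x => ?_)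
  simp only [Pi.add_apply]
  rw [Real.norm_eq_abs, abs_mul]
  nlinarith [sq_nonneg (|f x| - |g x|), sq_abs (f x), sq_abs (g x),
    abs_nonneg (f x), abs_nonneg (g x)]

instance : SFinite muPos := by unfold muPos; infer_instance
instance : SigmaFinite muPos := by unfold muPos; infer_instance

lemma muPos_Iio (c : ℝ) : muPos (Set.Iio c) = ENNReal.ofReal c := by
  rw [muPos_apply measurableSet_Iio, Set.Iio_inter_Ioi, Real.volume_Ioo, sub_zero]

lemma key {f ψ : ℝ → ℝ} (hfm : StronglyMeasurable f) (hf2 : MemLp f 2 muPos)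
    (hψ : Antitone ψ) (hψ2 : MemLp ψ 2 muPos)
    (hF : ∀ t, 0 ≤ t → 0 ≤ ∫ s in Set.Ioc (0:ℝ) t, f s) :
    0 ≤ ∫ s, f s * ψ s ∂muPos := by
  have hψ0 : ∀ s, 0 < s → 0 ≤ ψ s :=
    nonneg_of_antitoneOn (hψ.antitoneOn _) hψ2
  set A : Set (ℝ × ℝ) := {q : ℝ × ℝ | q.2 < ψ q.1} with hA
  have hAm : MeasurableSet A := measurableSet_lt measurable_snd (hψ.measurable.comp measurable_fst)
  set g : ℝ × ℝ → ℝ := A.indicator (fun q => f q.1) with hg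
  have hgm : StronglyMeasurable g := (hfm.comp_measurable measurable_fst).indicator hAm
  have hsec : ∀ s u : ℝ, g (s, u) = (Set.Iio (ψ s)).indicator (fun _ => f s) u := by
    intro s u
    simp only [hg, Set.indicator_apply, hA, Set.mem_setOf_eq, Set.mem_Iio]
  -- integrability of sections in u
  have h1 : ∀ s : ℝ, Integrable (fun u => g (s, u)) muPos := by
    intro s
    have : (fun u => g (s, u)) = (Set.Iio (ψ s)).indicator (fun _ => f s) := by
      funext u; exact hsec s u
    rw [this, integrable_indicator_iff measurableSet_Iio]
    refine integrableOn_const (lt_top_iff_ne_top.1 ?_)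
    rw [muPos_Iio]
    exact ENNReal.ofReal_lt_top
  -- the norm-marginal
  have hnorm : ∀ s : ℝ, 0 < s → (∫ u, ‖g (s, u)‖ ∂muPos) = |f s| * ψ s := by
    intro s hs
    have : (fun u => ‖g (s, u)‖) = (Set.Iio (ψ s)).indicator (fun _ => |f s|) := by
      funext u
      rw [hsec s u, norm_indicator_eq_indicator_norm, Real.norm_eq_abs]
    rw [this, integral_indicator_const _ measurableSet_Iio, measureReal_def, muPos_Iio,
      ENNReal.toReal_ofReal (hψ0 s hs), smul_eq_mul, mul_comm]
  have h2 : Integrable (fun s => ∫ u, ‖g (s, u)‖ ∂muPos) muPos := by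
    refine (integrable_mul_L2 hf2.abs hψ2).congr ?_
    have hmem : ∀ᵐ s ∂muPos, s ∈ Set.Ioi (0:ℝ) := ae_restrict_mem measurableSet_Ioi
    filter_upwards [hmem] with s hs
    exact (hnorm s hs).symm
  have hInt : Integrable g (muPos.prod muPos) :=
    (integrable_prod_iff hgm.aestronglyMeasurable).2 ⟨ae_of_all _ h1, h2⟩
  -- swap
  have hswap := integral_integral_swap (f := fun s u => g (s, u)) (μ := muPos) (ν := muPos)
    (by exact hInt)
  -- LHS equals our integral
  have hL : (∫ s, ∫ u, g (s, u) ∂muPos ∂muPos) = ∫ s, f s * ψ s ∂muPos := by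
    refine integral_congr_ae ?_
    have hmem : ∀ᵐ s ∂muPos, s ∈ Set.Ioi (0:ℝ) := ae_restrict_mem measurableSet_Ioi
    filter_upwards [hmem] with s hs
    have : (fun u => g (s, u)) = (Set.Iio (ψ s)).indicator (fun _ => f s) := by
      funext u; exact hsec s u
    rw [show (∫ u, g (s, u) ∂muPos) = ∫ u, (Set.Iio (ψ s)).indicator (fun _ => f s) u ∂muPos from by rw [this],
      integral_indicator_const _ measurableSet_Iio, measureReal_def, muPos_Iio,
      ENNReal.toReal_ofReal (hψ0 s hs), smul_eq_mul, mul_comm]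
  -- RHS nonneg
  have hR : 0 ≤ ∫ u, ∫ s, g (s, u) ∂muPos ∂muPos := by
    refine integral_nonneg_of_ae ?_
    have hmem : ∀ᵐ u ∂muPos, u ∈ Set.Ioi (0:ℝ) := ae_restrict_mem measurableSet_Ioi
    filter_upwards [hmem] with u hu
    have hu0 : (0:ℝ) < u := hu
    set T : Set ℝ := {s : ℝ | u < ψ s} with hT
    have hTm : MeasurableSet T := measurableSet_lt measurable_const hψ.measurable
    have hsec' : (fun s => g (s, u)) = T.indicator f := by
      funext s
      simp only [hg, Set.indicator_apply, hA, Set.mem_setOf_eq, hT]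
    rw [show (∫ s, g (s, u) ∂muPos) = ∫ s, T.indicator f s ∂muPos from by rw [hsec'],
      integral_indicator hTm, muPos, Measure.restrict_restrict hTm]
    set S : Set ℝ := T ∩ Set.Ioi 0 with hS
    rcases Set.eq_empty_or_nonempty S with hSe | hSne
    · rw [hSe]; simp
    · have hbdd : BddAbove S := by
        by_contra hnb
        refine not_memLp_of_lower (s₀ := 0) (c := u) le_rfl hu0 ?_ hψ2
        intro s hs
        obtain ⟨y, hyS, hxy⟩ := not_bddAbove_iff.1 hnb s
        exact le_of_lt (lt_of_lt_of_le hyS.1 (hψ hxy.le))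
      set a : ℝ := sSup S with ha
      obtain ⟨s₁, hs₁⟩ := id hSne
      have ha0 : 0 < a := lt_of_lt_of_le hs₁.2 (le_csSup hbdd hs₁)
      have hsub1 : Set.Ioo 0 a ⊆ S := by
        intro x hx
        obtain ⟨y, hyS, hxy⟩ := exists_lt_of_lt_csSup hSne hx.2
        exact ⟨lt_of_lt_of_le hyS.1 (hψ hxy.le), hx.1⟩
      have hsub2 : S ⊆ Set.Ioc 0 a := fun x hx => ⟨hx.2, le_csSup hbdd hx⟩
      have hae : S =ᵐ[volume] Set.Ioc 0 a := by
        rw [MeasureTheory.ae_eq_set]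
        constructor
        · exact measure_mono_null (Set.diff_subset_diff_left hsub2) (by simp)
        · refine measure_mono_null (t := {a}) ?_ (Real.volume_singleton)
          intro x hx
          rcases eq_or_lt_of_le hx.1.2 with h | h
          · exact h
          · exact absurd (hsub1 ⟨hx.1.1, h⟩) hx.2
      rw [Measure.restrict_congr_set hae]
      exact hF a ha0.le
  rw [← hL]; rw [hswap]; exact hR

lemma integrableOn_Ioc (a : E) (t : ℝ) : IntegrableOn (⇑a) (Set.Ioc 0 t) volume := by
  have h := (Lp.memLp a).restrict (Set.Ioc 0 t)
  rw [muPos_restrict measurableSet_Ioc Set.Ioc_subset_Ioi_self] at h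
  haveI : IsFiniteMeasure (volume.restrict (Set.Ioc (0:ℝ) t)) :=
    ⟨by rw [Measure.restrict_apply_univ]; exact measure_Ioc_lt_top⟩
  exact h.integrable (by norm_num)

lemma primitive_sub (a b : E) (t : ℝ) : primitive (a - b) t = primitive a t - primitive b t := by
  unfold primitive
  rw [← integral_sub (integrableOn_Ioc a t) (integrableOn_Ioc b t)]
  refine integral_congr_ae ?_
  have h := Lp.coeFn_sub a b
  have h' := ae_restrict_of_ae (s := Set.Ioc (0:ℝ) t) h
  rw [muPos_restrict measurableSet_Ioc Set.Ioc_subset_Ioi_self] at h'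
  filter_upwards [h'] with x hx
  simpa using hx

lemma primitive_zero (a : E) : primitive a 0 = 0 := by
  unfold primitive; simp

lemma inner_eq_integral (a b : E) : ⟪a, b⟫_ℝ = ∫ s, a s * b s ∂muPos := by
  rw [L2.inner_def]
  simp [RCLike.inner_apply, conj_trivial]
  exact integral_congr_ae (ae_of_all _ fun s => mul_comm _ _)

/-- inner product with an element of `V1` is nonneg if all primitives are nonneg -/
lemma inner_nonneg_of_V1 (a b : E) (hb : b ∈ V1)
    (hF : ∀ t, 0 ≤ t → 0 ≤ primitive a t) : 0 ≤ ⟪a, b⟫_ℝ := by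
  obtain ⟨ψ, hψa, hψe⟩ := hb
  set ψ' : ℝ → ℝ := fun s => ψ (max s 0) with hψ'def
  have hψ' : Antitone ψ' := by
    intro x y hxy
    exact hψa (le_max_right x 0) (le_max_right y 0) (max_le_max hxy le_rfl)
  have hmem : ∀ᵐ s ∂muPos, s ∈ Set.Ioi (0:ℝ) := ae_restrict_mem measurableSet_Ioi
  have hae : ⇑b =ᵐ[muPos] ψ' := by
    refine hψe.trans ?_
    filter_upwards [hmem] with s hs
    rw [hψ'def]; simp [max_eq_left (le_of_lt (Set.mem_Ioi.1 hs))]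
  have hψ'2 : MemLp ψ' 2 muPos := (Lp.memLp b).ae_eq hae
  rw [inner_eq_integral]
  have : ∫ s, a s * b s ∂muPos = ∫ s, a s * ψ' s ∂muPos := by
    refine integral_congr_ae ?_
    filter_upwards [hae] with s hs
    rw [hs]
  rw [this]
  exact key (Lp.stronglyMeasurable a) (Lp.memLp a) hψ' hψ'2 hF

-- V1 structure
lemma V1_zero : (0 : E) ∈ V1 :=
  ⟨fun _ => 0, fun _ _ _ _ _ => le_rfl, Lp.coeFn_zero _ _ _⟩

lemma V1_add {a b : E} (ha : a ∈ V1) (hb : b ∈ V1) : a + b ∈ V1 := by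
  obtain ⟨ψa, hψa, hea⟩ := ha
  obtain ⟨ψb, hψb, heb⟩ := hb
  refine ⟨ψa + ψb, hψa.add hψb, ?_⟩
  filter_upwards [Lp.coeFn_add a b, hea, heb] with x h1 h2 h3
  simp only [Pi.add_apply] at h1 ⊢
  rw [h1, h2, h3]

lemma V1_smul {c : ℝ} (hc : 0 ≤ c) {a : E} (ha : a ∈ V1) : c • a ∈ V1 := by
  obtain ⟨ψa, hψa, hea⟩ := ha
  refine ⟨fun x => c * ψa x, fun x hx y hy hxy => mul_le_mul_of_nonneg_left (hψa hx hy hxy) hc, ?_⟩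
  filter_upwards [Lp.coeFn_smul c a, hea] with x h1 h2
  simp only [Pi.smul_apply, smul_eq_mul] at h1 ⊢
  rw [h1, h2]

lemma V2_zero {d : ℕ} : (0 : HD d) ∈ V2 := fun _ => V1_zero

lemma V2_add {d : ℕ} {a b : HD d} (ha : a ∈ V2) (hb : b ∈ V2) : a + b ∈ V2 :=
  fun i => V1_add (ha i) (hb i)

lemma V2_convex {d : ℕ} : Convex ℝ (V2 (d := d)) := by
  intro x hx y hy s t hs ht _
  intro i
  have : (s • x + t • y) i = s • x i + t • y i := rfl
  rw [this]
  exact V1_add (V1_smul hs (hx i)) (V1_smul ht (hy i))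

lemma proj_var {d : ℕ} {Φ p : HD d} (hp : IsProj V2 Φ p) {y : HD d} (hy : y ∈ V2) :
    ⟪Φ - p, y - p⟫_ℝ ≤ 0 := by
  set c : ℝ := ⟪Φ - p, y - p⟫_ℝ with hc
  set M : ℝ := ‖y - p‖ ^ 2 with hM
  have hM0 : 0 ≤ M := sq_nonneg _
  have hθ : ∀ θ : ℝ, 0 < θ → θ ≤ 1 → 2 * (θ * c) ≤ θ ^ 2 * M := by
    intro θ h0 h1
    have hz : p + θ • (y - p) ∈ V2 := by
      have h := V2_convex hp.1 hy (by linarith : (0:ℝ) ≤ 1 - θ) h0.le (by ring)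
      have he : (1 - θ) • p + θ • y = p + θ • (y - p) := by
        rw [smul_sub, sub_smul, one_smul]; abel
      rwa [he] at h
    have hle := hp.2 _ hz
    have hre : Φ - (p + θ • (y - p)) = (Φ - p) - θ • (y - p) := by abel
    rw [hre] at hle
    have hsq : ‖Φ - p‖ ^ 2 ≤ ‖(Φ - p) - θ • (y - p)‖ ^ 2 :=
      pow_le_pow_left₀ (norm_nonneg _) hle 2
    have hexp : ‖(Φ - p) - θ • (y - p)‖ ^ 2
        = ‖Φ - p‖ ^ 2 - 2 * (θ * c) + θ ^ 2 * M := by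
      rw [norm_sub_sq_real, real_inner_smul_right, norm_smul, mul_pow]
      simp only [Real.norm_eq_abs, sq_abs]
      try ring
    rw [hexp] at hsq
    linarith
  by_contra hpos
  push_neg at hpos
  rcases eq_or_lt_of_le hM0 with hMz | hMp
  · have := hθ 1 one_pos le_rfl
    nlinarith
  · have hθ1 : 0 < min 1 (c / M) := lt_min one_pos (div_pos hpos hMp)
    have h := hθ _ hθ1 (min_le_left _ _)
    have h2 : (min 1 (c / M)) ^ 2 * M ≤ (min 1 (c / M)) * c := by
      rw [sq, mul_assoc]
      refine mul_le_mul_of_nonneg_left ?_ hθ1.le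
      calc min 1 (c / M) * M ≤ (c / M) * M :=
            mul_le_mul_of_nonneg_right (min_le_right _ _) hMp.le
        _ = c := div_mul_cancel₀ c hMp.ne'
    nlinarith

lemma proj_inner_le {d : ℕ} {Φ p : HD d} (hp : IsProj V2 Φ p) {y : HD d} (hy : y ∈ V2) :
    ⟪Φ - p, y⟫_ℝ ≤ 0 := by
  have := proj_var hp (V2_add hp.1 hy)
  simpa using this

lemma proj_inner_self {d : ℕ} {Φ p : HD d} (hp : IsProj V2 Φ p) : ⟪Φ - p, p⟫_ℝ = 0 := by
  have h1 := proj_inner_le hp hp.1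
  have h2 := proj_var hp V2_zero
  rw [zero_sub, inner_neg_right] at h2
  linarith

lemma muPos_Ioc_ne_top (t : ℝ) : muPos (Set.Ioc 0 t) ≠ ∞ := by
  rw [muPos, Measure.restrict_apply measurableSet_Ioc]
  exact ((measure_mono Set.inter_subset_left).trans_lt measure_Ioc_lt_top).ne

/-- The indicator of `(0,t]` as an element of `E`. -/
def chi (t : ℝ) : E := indicatorConstLp 2 measurableSet_Ioc (muPos_Ioc_ne_top t) (1 : ℝ)

lemma chi_mem_V1 (t : ℝ) : chi t ∈ V1 := by
  refine ⟨Set.indicator (Set.Iic t) (fun _ => (1:ℝ)), ?_, ?_⟩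
  · intro x _ y _ hxy
    by_cases hy : y ≤ t
    · simp [Set.indicator_apply, hy, hxy.trans hy]
    · simp only [Set.indicator_apply, Set.mem_Iic, hy, if_false]
      by_cases hx : x ≤ t <;> simp [hx]
  · refine (indicatorConstLp_coeFn (p := 2)).trans ?_
    have hmem : ∀ᵐ s ∂muPos, s ∈ Set.Ioi (0:ℝ) := ae_restrict_mem measurableSet_Ioi
    filter_upwards [hmem] with s hs
    have : s ∈ Set.Ioc 0 t ↔ s ∈ Set.Iic t :=
      ⟨fun h => h.2, fun h => ⟨hs, h⟩⟩
    simp only [Set.indicator_apply, this]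

lemma inner_chi (f : E) (t : ℝ) : ⟪chi t, f⟫_ℝ = primitive f t := by
  rw [chi, L2.inner_indicatorConstLp_one measurableSet_Ioc (muPos_Ioc_ne_top t) f]
  unfold primitive
  rw [muPos_restrict measurableSet_Ioc Set.Ioc_subset_Ioi_self]


/-- `h̲ = Pr_{V₂} h` is the unique solution of
`min{‖g‖ : g ∈ ℍ_d, g ≥ h on [0,∞)^d}`, and the projection on `V₂` acts
componentwise: the `i`-th component of `Pr_{V₂} h` is `Pr_{V₁} hᵢ`. -/
theorem proj_V2_solves_minimization {d : ℕ} (hd : 1 ≤ d) (Φ p : HD d)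
    (hp : IsProj V2 Φ p) :
    (∀ i, IsProj V1 (Φ i) (p i)) ∧
    (∀ t : Fin d → ℝ, (∀ i, 0 ≤ t i) → addPrim Φ t ≤ addPrim p t) ∧
    (∀ g : HD d, (∀ t : Fin d → ℝ, (∀ i, 0 ≤ t i) → addPrim Φ t ≤ addPrim g t) →
      ‖p‖ ≤ ‖g‖) ∧
    (∀ g : HD d, (∀ t : Fin d → ℝ, (∀ i, 0 ≤ t i) → addPrim Φ t ≤ addPrim g t) →
      ‖g‖ = ‖p‖ → g = p) := by
  -- Part 1: componentwise projection
  have part1 : ∀ i, IsProj V1 (Φ i) (p i) := by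
    intro i
    refine ⟨hp.1 i, ?_⟩
    intro y hy
    set q : HD d := WithLp.toLp 2 (Function.update p.ofLp i y) with hq
    have hqV : q ∈ V2 := by
      intro j
      by_cases hj : j = i
      · subst hj; rw [hq, PiLp.toLp_apply, Function.update_self]; exact hy
      · rw [hq, PiLp.toLp_apply, Function.update_of_ne hj]; exact hp.1 j
    have hle := hp.2 q hqV
    have hsq : ‖Φ - p‖ ^ 2 ≤ ‖Φ - q‖ ^ 2 := pow_le_pow_left₀ (norm_nonneg _) hle 2
    rw [PiLp.norm_sq_eq_of_L2, PiLp.norm_sq_eq_of_L2] at hsq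
    simp only [PiLp.sub_apply] at hsq
    have hterm : ∀ j, j ≠ i → ‖Φ j - q j‖ ^ 2 = ‖Φ j - p j‖ ^ 2 := by
      intro j hj
      rw [hq]; show ‖Φ j - Function.update p.ofLp i y j‖ ^ 2 = _; rw [Function.update_of_ne hj]
    have hsum : ∑ j, ‖Φ j - p j‖ ^ 2 - ‖Φ i - p i‖ ^ 2
        = ∑ j, ‖Φ j - q j‖ ^ 2 - ‖Φ i - q i‖ ^ 2 := by
      rw [← Finset.sum_erase_eq_sub (Finset.mem_univ i),
        ← Finset.sum_erase_eq_sub (Finset.mem_univ i)]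
      exact Finset.sum_congr rfl fun j hj => (hterm j (Finset.ne_of_mem_erase hj)).symm
    have hq_i : q i = y := by rw [hq, PiLp.toLp_apply, Function.update_self]
    have h2 : ‖Φ i - p i‖ ^ 2 ≤ ‖Φ i - y‖ ^ 2 := by
      rw [← hq_i]; nlinarith [hsq, hsum]
    have h3 := Real.sqrt_le_sqrt h2
    rwa [Real.sqrt_sq (norm_nonneg _), Real.sqrt_sq (norm_nonneg _)] at h3
  -- Part 2
  have hcomp2 : ∀ (i : Fin d) (s : ℝ), 0 ≤ s → primitive (Φ i) s ≤ primitive (p i) s := by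
    intro i s _
    set Ψ : HD d := WithLp.toLp 2 (fun j => if j = i then chi s else 0 : ∀ _ : Fin d, E) with hΨ
    have hΨV : Ψ ∈ V2 := by
      intro j
      by_cases hj : j = i
      · rw [hΨ]; dsimp only; rw [if_pos hj]; exact chi_mem_V1 s
      · rw [hΨ]; dsimp only; rw [if_neg hj]; exact V1_zero
    have hinner := proj_inner_le hp hΨV
    have hsum : ⟪Φ - p, Ψ⟫_ℝ = ⟪Φ i - p i, chi s⟫_ℝ := by
      rw [PiLp.inner_apply]
      have h1 : ∑ j, ⟪(Φ - p) j, Ψ j⟫_ℝ = ⟪(Φ - p) i, Ψ i⟫_ℝ :=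
        Finset.sum_eq_single_of_mem i (Finset.mem_univ i)
          (fun j _ hj => by
            rw [hΨ]; dsimp only; rw [if_neg hj, inner_zero_right])
      rw [h1, hΨ]
      dsimp only
      rw [if_pos rfl, PiLp.sub_apply]
    rw [hsum, real_inner_comm, inner_chi, primitive_sub] at hinner
    linarith
  have part2 : ∀ t : Fin d → ℝ, (∀ i, 0 ≤ t i) → addPrim Φ t ≤ addPrim p t := by
    intro t ht
    exact Finset.sum_le_sum fun i _ => hcomp2 i (t i) (ht i)
  -- key inequality for parts 3 and 4
  have hkey : ∀ g : HD d, (∀ t : Fin d → ℝ, (∀ i, 0 ≤ t i) → addPrim Φ t ≤ addPrim g t) →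
      0 ≤ ⟪p, g - p⟫_ℝ := by
    intro g hg
    have haP : ∀ (X : HD d) (i : Fin d) (s : ℝ),
        addPrim X (Function.update (fun _ => (0:ℝ)) i s) = primitive (X i) s := by
      intro X i s
      unfold addPrim
      refine Finset.sum_eq_single_of_mem i (Finset.mem_univ i) ?_ |>.trans ?_
      · intro j _ hj
        rw [Function.update_of_ne hj]
        exact primitive_zero _
      · rw [Function.update_self]
    have hFcomp : ∀ i : Fin d, ∀ s, 0 ≤ s → 0 ≤ primitive (g i - Φ i) s := by
      intro i s hs
      have ht := hg (Function.update (fun _ => (0:ℝ)) i s) ?_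
      swap
      · intro j
        by_cases hj : j = i
        · subst hj; rw [Function.update_self]; exact hs
        · rw [Function.update_of_ne hj]
      rw [haP, haP] at ht
      rw [primitive_sub]
      linarith
    have hip : 0 ≤ ⟪g - Φ, p⟫_ℝ := by
      rw [PiLp.inner_apply]
      refine Finset.sum_nonneg fun i _ => ?_
      have h := inner_nonneg_of_V1 (g i - Φ i) (p i) (hp.1 i) (fun u hu => hFcomp i u hu)
      simpa [PiLp.sub_apply] using h
    have horth := proj_inner_self hp
    have hdecomp : ⟪p, g - p⟫_ℝ = ⟪g - Φ, p⟫_ℝ + ⟪Φ - p, p⟫_ℝ := by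
      rw [real_inner_comm (g - p) p, show g - p = (g - Φ) + (Φ - p) by abel, inner_add_left]
    rw [hdecomp, horth]
    linarith
  have hnormsq : ∀ g : HD d, ‖g‖ ^ 2 = ‖p‖ ^ 2 + 2 * ⟪p, g - p⟫_ℝ + ‖g - p‖ ^ 2 := by
    intro g
    have := norm_add_sq_real p (g - p)
    rwa [show p + (g - p) = g by abel] at this
  have part3 : ∀ g : HD d, (∀ t : Fin d → ℝ, (∀ i, 0 ≤ t i) → addPrim Φ t ≤ addPrim g t) →
      ‖p‖ ≤ ‖g‖ := by
    intro g hg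
    have h1 := hkey g hg
    have h2 : ‖p‖ ^ 2 ≤ ‖g‖ ^ 2 := by
      rw [hnormsq g]
      nlinarith [sq_nonneg ‖g - p‖]
    have h3 := Real.sqrt_le_sqrt h2
    rwa [Real.sqrt_sq (norm_nonneg _), Real.sqrt_sq (norm_nonneg _)] at h3
  refine ⟨part1, part2, part3, ?_⟩
  intro g hg hnorm
  have h1 := hkey g hg
  have h2 := hnormsq g
  rw [hnorm] at h2
  have h3 : ‖g - p‖ ^ 2 ≤ 0 := by nlinarith
  have h4 : ‖g - p‖ = 0 := by nlinarith [norm_nonneg (g - p), sq_nonneg ‖g - p‖]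
  have h5 : g - p = 0 := norm_eq_zero.1 h4
  exact sub_eq_zero.1 h5
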